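/- Let ε ∈ (0, 3/4), λ > 0, ρ > 0, L' > 0, n ≥ 1, α > 0, and C = 3L'/(λ(1−ε)) + 2. Let x_{i,k−1} ∈ ℝ^{d×r} for i ∈ [n], set x̄_{k−1} = (1/n)Σ_i x_{i,k−1}, ȳ_{k−1} = (1/n)Σ_i Λ_i(x_{i,k−1}), and x̄_k = x̄_{k−1} − α ȳ_{k−1}. Assume: each Λ_i is L'-Lipschitz (so ‖ȳ_{k−1} − Λ(x̄_{k−1})‖_F ≤ (L'/√n)‖𝐱_{k−1} − 𝐱̄_{k−1}‖_F); the descent inequality 𝓛(x̄_k) ≤ 𝓛(x̄_{k−1}) + ⟨∇𝓛(x̄_{k−1}), x̄_k − x̄_{k−1}⟩ + (L'/2)‖x̄_k − x̄_{k−1}‖_F²; ⟨Λ(x̄_{k−1}), ∇𝓛(x̄_{k−1})⟩ ≥ ρ‖Λ(x̄_{k−1})‖_F²; and ‖∇𝓛(x̄_{k−1})‖_F ≤ C‖Λ(x̄_{k−1})‖_F. Then 𝓛(x̄_k) − 𝓛(x̄_{k−1}) ≤ −(αρ/2)‖Λ(x̄_{k−1})‖_F² + (αC²L'²/(2ρn))‖𝐱̄_{k−1}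 − 𝐱_{k−1}‖_F² + (α²L'/2)‖ȳ_{k−1}‖_F². -/

import Mathlib

open Matrix BigOperators Finset

noncomputable section

namespace DRFGT

/-- Frobenius inner product `⟨A, B⟩ = Tr (A Bᵀ)`. -/
def finner {m k : Type*} [Fintype m] [Fintype k] (A B : Matrix m k ℝ) : ℝ :=
  Matrix.trace (A * Bᵀ)

/-- Frobenius norm `‖A‖_F = √⟨A, A⟩`. -/
def fnorm {m k : Type*} [Fintype m] [Fintype k] (A : Matrix m k ℝ) : ℝ :=
  Real.sqrt (finner A A)

/-- Skew part of a square matrix, `skew(A) = (A − Aᵀ)/2`. -/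
def mskew {m : Type*} [Fintype m] (A : Matrix m m ℝ) : Matrix m m ℝ :=
  (2 : ℝ)⁻¹ • (A - Aᵀ)

/-- Symmetric part of a square matrix, `sym(A) = (A + Aᵀ)/2`. -/
def msym {m : Type*} [Fintype m] (A : Matrix m m ℝ) : Matrix m m ℝ :=
  (2 : ℝ)⁻¹ • (A + Aᵀ)

/-- Relative (Riemannian) gradient `grad f(x) = skew(∇f(x) xᵀ) x`, where `Df` denotes the
Euclidean gradient `∇f` of `f`. -/
def rgrad {d r : ℕ} (Df : Matrix (Fin d) (Fin r) ℝ → Matrix (Fin d) (Fin r) ℝ)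
    (x : Matrix (Fin d) (Fin r) ℝ) : Matrix (Fin d) (Fin r) ℝ :=
  mskew (Df x * xᵀ) * x

/-- Landing field `Λ(x) = grad f(x) + λ x (xᵀ x − I_r)`. -/
def landing {d r : ℕ} (Df : Matrix (Fin d) (Fin r) ℝ → Matrix (Fin d) (Fin r) ℝ) (lam : ℝ)
    (x : Matrix (Fin d) (Fin r) ℝ) : Matrix (Fin d) (Fin r) ℝ :=
  rgrad Df x + lam • (x * (xᵀ * x - 1))

/-- The Stiefel manifold `St(d,r) = {x : xᵀ x = I_r}`. -/
def St (d r : ℕ) : Set (Matrix (Fin d) (Fin r) ℝ) := {x | xᵀ * x = 1}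

/-- The safety region `St(d,r)^ε = {x : ‖xᵀ x − I_r‖_F ≤ ε}`. -/
def StEps (d r : ℕ) (ε : ℝ) : Set (Matrix (Fin d) (Fin r) ℝ) :=
  {x | fnorm (xᵀ * x - 1) ≤ ε}

/-- The merit function `𝓛(x) = f(x) − ½⟨sym(xᵀ∇f(x)), xᵀx − I_r⟩ + γ·¼‖xᵀx − I_r‖_F²`. -/
def merit {d r : ℕ} (f : Matrix (Fin d) (Fin r) ℝ → ℝ)
    (Df : Matrix (Fin d) (Fin r) ℝ → Matrix (Fin d) (Fin r) ℝ) (γ : ℝ)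
    (x : Matrix (Fin d) (Fin r) ℝ) : ℝ :=
  f x - (2 : ℝ)⁻¹ * finner (msym (xᵀ * Df x)) (xᵀ * x - 1)
    + γ * (4 : ℝ)⁻¹ * fnorm (xᵀ * x - 1) ^ 2

/-- The gradient of the merit function at on-manifold points:
`∇𝓛(x) = ∇f(x) − x · sym(xᵀ∇f(x))` for `x ∈ St(d,r)`. -/
def meritGradSt {d r : ℕ} (Df : Matrix (Fin d) (Fin r) ℝ → Matrix (Fin d) (Fin r) ℝ)
    (x : Matrix (Fin d) (Fin r) ℝ) : Matrix (Fin d) (Fin r) ℝ :=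
  Df x - x * msym (xᵀ * Df x)

/-- `x'` is the polar factor of a full-column-rank `x`, i.e. the projection `Proj_St(x)` of `x`
onto the Stiefel manifold: if `x = U S Vᵀ` is a thin SVD then `x' = U Vᵀ`, equivalently
`x'ᵀ x' = I_r` and `x = x' P` for a positive definite `P` (namely `P = V S Vᵀ`). -/
def IsPolarFactor {d r : ℕ} (x x' : Matrix (Fin d) (Fin r) ℝ) : Prop :=
  x'ᵀ * x' = 1 ∧ ∃ P : Matrix (Fin r) (Fin r) ℝ, P.PosDef ∧ x = x' * P

/-- Frobenius distance from `x` to a set `S`: `dist(S,x) = inf_{y ∈ S} ‖x − y‖_F`. -/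
def fdist {d r : ℕ} (S : Set (Matrix (Fin d) (Fin r) ℝ)) (x : Matrix (Fin d) (Fin r) ℝ) : ℝ :=
  sInf ((fun y => fnorm (x - y)) '' S)

/-- Network average `z̄ = (1/n) Σᵢ zᵢ`. -/
def avg {n d r : ℕ} (z : Fin n → Matrix (Fin d) (Fin r) ℝ) : Matrix (Fin d) (Fin r) ℝ :=
  (n : ℝ)⁻¹ • ∑ i, z i

/-- Frobenius norm of a stacked family: `‖𝐳‖_F = (Σᵢ ‖zᵢ‖_F²)^{1/2}`. -/
def snorm {n d r : ℕ} (z : Fin n → Matrix (Fin d) (Fin r) ℝ) : ℝ :=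
  Real.sqrt (∑ i, fnorm (z i) ^ 2)



/-- Linear embedding of matrices into Euclidean space, used to transport norm facts. -/
def toEuc {d r : ℕ} : Matrix (Fin d) (Fin r) ℝ →ₗ[ℝ] EuclideanSpace ℝ (Fin d × Fin r) where
  toFun A := WithLp.toLp 2 (fun p : Fin d × Fin r => A p.1 p.2)
  map_add' _ _ := rfl
  map_smul' _ _ := rfl

lemma finner_eq {d r : ℕ} (A B : Matrix (Fin d) (Fin r) ℝ) :
    finner A B = inner ℝ (toEuc A) (toEuc B) := by
  simp [finner, Matrix.trace, Matrix.diag, Matrix.mul_apply, toEuc,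
    PiLp.inner_apply, RCLike.inner_apply, Fintype.sum_prod_type, mul_comm]
  rfl

lemma fnorm_eq {d r : ℕ} (A : Matrix (Fin d) (Fin r) ℝ) : fnorm A = ‖toEuc A‖ := by
  rw [fnorm, finner_eq, real_inner_self_eq_norm_sq, Real.sqrt_sq (norm_nonneg _)]

lemma fnorm_nonneg' {d r : ℕ} (A : Matrix (Fin d) (Fin r) ℝ) : 0 ≤ fnorm A :=
  Real.sqrt_nonneg _

lemma fnorm_smul' {d r : ℕ} (c : ℝ) (A : Matrix (Fin d) (Fin r) ℝ) :
    fnorm (c • A) = |c| * fnorm A := by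
  rw [fnorm_eq, fnorm_eq, LinearMap.map_smul, norm_smul, Real.norm_eq_abs]

lemma fnorm_sub_comm {d r : ℕ} (A B : Matrix (Fin d) (Fin r) ℝ) :
    fnorm (A - B) = fnorm (B - A) := by
  rw [fnorm_eq, fnorm_eq, map_sub, map_sub, ← norm_neg, neg_sub]

lemma fnorm_sum_le {d r : ℕ} {ι : Type*} (s : Finset ι) (z : ι → Matrix (Fin d) (Fin r) ℝ) :
    fnorm (∑ i ∈ s, z i) ≤ ∑ i ∈ s, fnorm (z i) := by
  simp_rw [fnorm_eq, map_sum]; exact norm_sum_le _ _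

lemma finner_comm {d r : ℕ} (A B : Matrix (Fin d) (Fin r) ℝ) : finner A B = finner B A := by
  rw [finner_eq, finner_eq, real_inner_comm]

lemma abs_finner_le {d r : ℕ} (A B : Matrix (Fin d) (Fin r) ℝ) :
    |finner A B| ≤ fnorm A * fnorm B := by
  rw [finner_eq, fnorm_eq, fnorm_eq]; exact abs_real_inner_le_norm _ _

lemma finner_smul_right' {d r : ℕ} (c : ℝ) (A B : Matrix (Fin d) (Fin r) ℝ) :
    finner A (c • B) = c * finner A B := by
  rw [finner_eq, finner_eq, LinearMap.map_smul, real_inner_smul_right]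

lemma finner_add_right' {d r : ℕ} (A B C : Matrix (Fin d) (Fin r) ℝ) :
    finner A (B + C) = finner A B + finner A C := by
  rw [finner_eq, finner_eq, finner_eq, map_add, inner_add_right]

lemma mskew_smul {m : Type*} [Fintype m] (c : ℝ) (A : Matrix m m ℝ) :
    mskew (c • A) = c • mskew A := by
  simp [mskew, Matrix.transpose_smul, smul_sub, smul_comm c]

lemma mskew_sum {m ι : Type*} [Fintype m] (s : Finset ι) (A : ι → Matrix m m ℝ) :
    mskew (∑ i ∈ s, A i) = ∑ i ∈ s, mskew (A i) := by
  simp [mskew, Matrix.transpose_sum, Finset.sum_sub_distrib, Finset.smul_sum, smul_sub]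

lemma landing_avg {d r n : ℕ} (hn : 0 < n)
    (Dfi : Fin n → Matrix (Fin d) (Fin r) ℝ → Matrix (Fin d) (Fin r) ℝ) (lam : ℝ)
    (x : Matrix (Fin d) (Fin r) ℝ) :
    landing (fun z => (n : ℝ)⁻¹ • ∑ i, Dfi i z) lam x
      = (n : ℝ)⁻¹ • ∑ i, landing (Dfi i) lam x := by
  have hn' : ((n : ℝ)) ≠ 0 := Nat.cast_ne_zero.mpr hn.ne'
  simp only [landing, rgrad, Matrix.smul_mul, Matrix.sum_mul, mskew_smul, mskew_sum,
    Finset.sum_add_distrib, smul_add]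
  congr 1
  rw [Finset.sum_const, card_univ, Fintype.card_fin, ← Nat.cast_smul_eq_nsmul ℝ, smul_smul,
    inv_mul_cancel₀ hn', one_smul]

set_option maxHeartbeats 2000000 in
/-- one-step descent of the merit function, Lemma 5 of the paper.
Here `fi i`/`Dfi i` are the local objectives and their Euclidean gradients, the global objective
is `f = (1/n)Σᵢ fᵢ` with gradient `Df = (1/n)Σᵢ ∇fᵢ`, `gL` denotes the merit-function gradient
`∇𝓛(x̄_{k−1})`, `ȳ_{k−1} = (1/n)Σᵢ Λᵢ(x_{i,k−1})`, and `x̄_k = x̄_{k−1} − α ȳ_{k−1}`. -/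
theorem merit_one_step_descent {n d r : ℕ} (hn : 0 < n) (ε lam ρ L' α γ : ℝ)
    (hε : ε ∈ Set.Ioo (0 : ℝ) (3 / 4)) (hlam : 0 < lam) (hρ : 0 < ρ) (hL' : 0 < L')
    (hα : 0 < α)
    (fi : Fin n → Matrix (Fin d) (Fin r) ℝ → ℝ)
    (Dfi : Fin n → Matrix (Fin d) (Fin r) ℝ → Matrix (Fin d) (Fin r) ℝ)
    (xp : Fin n → Matrix (Fin d) (Fin r) ℝ)
    (gL : Matrix (Fin d) (Fin r) ℝ)
    (hLip : ∀ i, ∀ u v : Matrix (Fin d) (Fin r) ℝ,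
      fnorm (landing (Dfi i) lam u - landing (Dfi i) lam v) ≤ L' * fnorm (u - v))
    -- abbreviations: global objective/gradient, landing field, previous/next averages
    (f : Matrix (Fin d) (Fin r) ℝ → ℝ) (hf : f = fun z => (n : ℝ)⁻¹ * ∑ i, fi i z)
    (Df : Matrix (Fin d) (Fin r) ℝ → Matrix (Fin d) (Fin r) ℝ)
    (hDf : Df = fun z => (n : ℝ)⁻¹ • ∑ i, Dfi i z)
    (ybar : Matrix (Fin d) (Fin r) ℝ) (hybar : ybar = avg (fun i => landing (Dfi i) lam (xp i)))
    (xbarNext : Matrix (Fin d) (Fin r) ℝ) (hxbarNext : xbarNext = avg xp - α • ybar)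
    -- hypotheses: descent inequality, merit/landing compatibility, gradient comparison
    (hdescent : merit f Df γ xbarNext ≤ merit f Df γ (avg xp)
      + finner gL (xbarNext - avg xp) + L' / 2 * fnorm (xbarNext - avg xp) ^ 2)
    (hprop : finner (landing Df lam (avg xp)) gL ≥ ρ * fnorm (landing Df lam (avg xp)) ^ 2)
    (hC : fnorm gL ≤ (3 * L' / (lam * (1 - ε)) + 2) * fnorm (landing Df lam (avg xp))) :
    merit f Df γ xbarNext - merit f Df γ (avg xp) ≤
      -(α * ρ / 2) * fnorm (landing Df lam (avg xp)) ^ 2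
        + α * (3 * L' / (lam * (1 - ε)) + 2) ^ 2 * L' ^ 2 / (2 * ρ * n)
          * snorm (fun i => avg xp - xp i) ^ 2
        + α ^ 2 * L' / 2 * fnorm ybar ^ 2 := by
  have hnR : (0:ℝ) < n := Nat.cast_pos.mpr hn
  set C : ℝ := 3 * L' / (lam * (1 - ε)) + 2 with hCdef
  set s : ℝ := snorm (fun i => avg xp - xp i) with hsdef
  set a : ℝ := fnorm (landing Df lam (avg xp)) with hadef
  set y : ℝ := fnorm ybar with hydef
  have hsn : (0:ℝ) < Real.sqrt n := Real.sqrt_pos.mpr hnR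
  have hsn2 : Real.sqrt n * Real.sqrt n = (n:ℝ) := Real.mul_self_sqrt hnR.le
  have hC0 : 0 < C := by
    rw [hCdef]
    have h1 : 0 < lam * (1 - ε) := by nlinarith [hε.1, hε.2]
    have h2 : 0 < 3 * L' / (lam * (1 - ε)) := by positivity
    linarith
  have hs0 : 0 ≤ s := Real.sqrt_nonneg _
  have ha0 : 0 ≤ a := fnorm_nonneg' _
  have hland : landing Df lam (avg xp) = (n:ℝ)⁻¹ • ∑ i, landing (Dfi i) lam (avg xp) := by
    rw [hDf]; exact landing_avg hn Dfi lam (avg xp)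
  set t : ℝ := L' * s / Real.sqrt n with htdef
  have ht0 : 0 ≤ t := by rw [htdef]; positivity
  -- consensus error bound on ybar − Λ(x̄)
  have hdiff : fnorm (ybar - landing Df lam (avg xp)) ≤ t := by
    have hy : ybar - landing Df lam (avg xp)
        = (n:ℝ)⁻¹ • ∑ i, (landing (Dfi i) lam (xp i) - landing (Dfi i) lam (avg xp)) := by
      rw [hybar, hland]; unfold avg
      rw [← smul_sub, Finset.sum_sub_distrib]
    rw [hy, fnorm_smul', abs_of_nonneg (by positivity)]
    have h1 : fnorm (∑ i, (landing (Dfi i) lam (xp i) - landing (Dfi i) lam (avg xp)))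
        ≤ ∑ i, L' * fnorm (xp i - avg xp) :=
      (fnorm_sum_le _ _).trans (Finset.sum_le_sum fun i _ => hLip i _ _)
    have h2 : ∑ i, L' * fnorm (xp i - avg xp) ≤ L' * (Real.sqrt n * s) := by
      rw [← Finset.mul_sum]
      refine mul_le_mul_of_nonneg_left ?_ hL'.le
      have hcs := Real.sum_mul_le_sqrt_mul_sqrt Finset.univ (fun _ : Fin n => (1:ℝ))
        (fun i => fnorm (xp i - avg xp))
      simp only [one_mul, one_pow, Finset.sum_const, card_univ, Fintype.card_fin,
        nsmul_eq_mul, mul_one] at hcs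
      refine hcs.trans_eq ?_
      rw [hsdef]; unfold snorm
      congr 2
      exact Finset.sum_congr rfl fun i _ => by rw [fnorm_sub_comm]
    calc (n:ℝ)⁻¹ * fnorm (∑ i, (landing (Dfi i) lam (xp i) - landing (Dfi i) lam (avg xp)))
        ≤ (n:ℝ)⁻¹ * (L' * (Real.sqrt n * s)) :=
          mul_le_mul_of_nonneg_left (h1.trans h2) (by positivity)
      _ = t := by
          rw [htdef, eq_div_iff hsn.ne']
          calc (n:ℝ)⁻¹ * (L' * (Real.sqrt n * s)) * Real.sqrt n
              = (n:ℝ)⁻¹ * (Real.sqrt n * Real.sqrt n) * (L' * s) := by ring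
            _ = L' * s := by rw [hsn2, inv_mul_cancel₀ hnR.ne', one_mul]
  have ht2 : t ^ 2 = L' ^ 2 * s ^ 2 / n := by
    rw [htdef, div_pow, Real.sq_sqrt hnR.le, mul_pow]
  clear_value C s a y t
  have he0 : 0 ≤ fnorm (ybar - landing Df lam (avg xp)) := fnorm_nonneg' _
  -- rewrite the step
  have hstep : xbarNext - avg xp = (-α) • ybar := by
    rw [hxbarNext, neg_smul, sub_sub_cancel_left]
  have hfn : fnorm (xbarNext - avg xp) ^ 2 = α ^ 2 * y ^ 2 := by
    rw [hstep, fnorm_smul', abs_neg, abs_of_nonneg hα.le, hydef]; ring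
  have hin : finner gL (xbarNext - avg xp) = -α * finner gL ybar := by
    rw [hstep, finner_smul_right']
  -- decompose the inner product
  have hdecomp : finner gL ybar
      = finner gL (landing Df lam (avg xp)) + finner gL (ybar - landing Df lam (avg xp)) := by
    rw [← finner_add_right', add_sub_cancel]
  have hP : ρ * a ^ 2 ≤ finner gL (landing Df lam (avg xp)) := by
    rw [finner_comm]; exact hprop
  have hQ : -(fnorm gL * fnorm (ybar - landing Df lam (avg xp)))
      ≤ finner gL (ybar - landing Df lam (avg xp)) :=
    neg_le_of_abs_le (abs_finner_le _ _)
  have hg0 : 0 ≤ fnorm gL := fnorm_nonneg' _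
  have hge : fnorm gL * fnorm (ybar - landing Df lam (avg xp)) ≤ (C * a) * t :=
    mul_le_mul hC hdiff he0 (by positivity)
  -- AM–GM step
  have hkey : (C * a) * t ≤ ρ / 2 * a ^ 2 + C ^ 2 * L' ^ 2 / (2 * ρ * n) * s ^ 2 := by
    have hrhs : C ^ 2 * L' ^ 2 / (2 * ρ * n) * s ^ 2 = C ^ 2 * t ^ 2 / (2 * ρ) := by
      rw [ht2]; field_simp
    rw [hrhs]
    have hsq := sq_nonneg (ρ * a - C * t)
    have h2ρ : (0:ℝ) < 2 * ρ := by linarith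
    have hid : ρ / 2 * a ^ 2 + C ^ 2 * t ^ 2 / (2 * ρ) - (C * a) * t
        = (ρ ^ 2 * a ^ 2 + C ^ 2 * t ^ 2 - 2 * ρ * ((C * a) * t)) / (2 * ρ) := by
      field_simp
    have hnum : 0 ≤ ρ ^ 2 * a ^ 2 + C ^ 2 * t ^ 2 - 2 * ρ * ((C * a) * t) := by nlinarith
    linarith [hid ▸ div_nonneg hnum h2ρ.le]
  -- combine
  have e1 := mul_le_mul_of_nonneg_left hP hα.le
  have e2 := mul_le_mul_of_nonneg_left hQ hα.le
  have e3 := mul_le_mul_of_nonneg_left hge hα.le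
  have e4 := mul_le_mul_of_nonneg_left hkey hα.le
  have hfinal : -α * finner gL ybar
      ≤ -(α * ρ / 2) * a ^ 2 + α * C ^ 2 * L' ^ 2 / (2 * ρ * n) * s ^ 2 := by
    rw [hdecomp]
    have hb : -(α * ρ / 2) * a ^ 2 + α * C ^ 2 * L' ^ 2 / (2 * ρ * n) * s ^ 2
        = -(α * (ρ * a ^ 2))
          + α * (ρ / 2 * a ^ 2 + C ^ 2 * L' ^ 2 / (2 * ρ * n) * s ^ 2) := by ring
    have hl : -α * (finner gL (landing Df lam (avg xp))
          + finner gL (ybar - landing Df lam (avg xp)))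
        = -(α * finner gL (landing Df lam (avg xp)))
          + -(α * finner gL (ybar - landing Df lam (avg xp))) := by ring
    rw [hb, hl]
    have h2 : -(α * finner gL (ybar - landing Df lam (avg xp)))
        ≤ α * (fnorm gL * fnorm (ybar - landing Df lam (avg xp))) := by linarith [e2]
    linarith [e1, e3, e4, h2]
  have hd : merit f Df γ xbarNext - merit f Df γ (avg xp)
      ≤ -α * finner gL ybar + L' / 2 * (α ^ 2 * y ^ 2) := by
    rw [← hin, ← hfn]; linarith [hdescent]
  calc merit f Df γ xbarNext - merit f Df γ (avg xp)
      ≤ -α * finner gL ybar + L' / 2 * (α ^ 2 * y ^ 2) := hd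
    _ ≤ -(α * ρ / 2) * a ^ 2 + α * C ^ 2 * L' ^ 2 / (2 * ρ * n) * s ^ 2
        + L' / 2 * (α ^ 2 * y ^ 2) := by linarith [hfinal]
    _ = -(α * ρ / 2) * a ^ 2 + α * C ^ 2 * L' ^ 2 / (2 * ρ * n) * s ^ 2
        + α ^ 2 * L' / 2 * y ^ 2 := by ring

end DRFGT
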